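/- Let A be a finite von Neumann algebra with no type I_2 summand acting on a separable Hilbert space, and let μ : A^pr → [0,+∞] be a σ-finite infinite measure. Then the restriction of μ to M_μ = {p : μ(p) < ∞} is a closed measure: for any p ∈ A^pr, if every subprojection q ≤ p is a projection of finite μ-measure, then μ(p) < ∞. -/

import Mathlib

open LinearMap Filter Topology ENNReal

section Preamble

variable {H : Type} [NormedAddCommGroup H] [InnerProductSpace ℂ H] [CompleteSpace H]

/-- An orthogonal projection: a self-adjoint idempotent bounded operator. -/
def IsProjOp (p : H →L[ℂ] H) : Prop := IsIdempotentElem p ∧ IsSelfAdjoint p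

/-- The orthogonal projection onto the closure of a submodule. -/
noncomputable def sProj (K : Submodule ℂ H) : H →L[ℂ] H :=
  haveI : CompleteSpace K.topologicalClosure :=
    K.isClosed_topologicalClosure.completeSpace_coe
  K.topologicalClosure.subtypeL.comp (Submodule.orthogonalProjectionOnto K.topologicalClosure)

/-- `p ∨ q`: projection onto the closed span of the ranges. -/
noncomputable def pSup (p q : H →L[ℂ] H) : H →L[ℂ] H :=
  sProj (LinearMap.range (p : H →ₗ[ℂ] H) ⊔ LinearMap.range (q : H →ₗ[ℂ] H))

/-- `p ∧ q`: projection onto the intersection of the ranges. -/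
noncomputable def pInf (p q : H →L[ℂ] H) : H →L[ℂ] H :=
  sProj (LinearMap.range (p : H →ₗ[ℂ] H) ⊓ LinearMap.range (q : H →ₗ[ℂ] H))

/-- Supremum of a family of projections. -/
noncomputable def pSupFam {ι : Type} (q : ι → H →L[ℂ] H) : H →L[ℂ] H :=
  sProj (⨆ i, LinearMap.range (q i : H →ₗ[ℂ] H))

/-- Order on projections via ranges. -/
def pLe (p q : H →L[ℂ] H) : Prop := LinearMap.range (p : H →ₗ[ℂ] H) ≤ LinearMap.range (q : H →ₗ[ℂ] H)

/-- `r n ↗ rl`: increasing sequence of projections with supremum `rl`. -/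
def AscendsTo (r : ℕ → H →L[ℂ] H) (rl : H →L[ℂ] H) : Prop :=
  (∀ n, pLe (r n) (r (n + 1))) ∧ (∀ n, pLe (r n) rl) ∧
    (⨆ n, LinearMap.range (r n : H →ₗ[ℂ] H)).topologicalClosure = LinearMap.range (rl : H →ₗ[ℂ] H)

/-- The set of orthogonal projections belonging to a von Neumann algebra. -/
def projSet (A : VonNeumannAlgebra H) : Set (H →L[ℂ] H) :=
  {p | p ∈ A ∧ IsProjOp p}

/-- An ideal of projections inside the projection lattice of `A`. -/
structure IsIdealOfProj (A : VonNeumannAlgebra H) (M : Set (H →L[ℂ] H)) : Prop where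
  subset : M ⊆ projSet A
  downward : ∀ p q, p ∈ projSet A → q ∈ M → pLe p q → p ∈ M
  supClosed : ∀ p ∈ M, ∀ q ∈ M, ‖p * q‖ < 1 → pSup p q ∈ M
  total : (⨆ p ∈ M, LinearMap.range (p : H →ₗ[ℂ] H)).topologicalClosure = ⊤

/-- Murray–von Neumann equivalence of projections in `A`. -/
def MvNEquiv (A : VonNeumannAlgebra H) (p q : H →L[ℂ] H) : Prop :=
  ∃ u, u ∈ A ∧ star u * u = p ∧ u * star u = q

/-- A projection `p` of `A` is finite. -/
def IsFiniteProjIn (A : VonNeumannAlgebra H) (p : H →L[ℂ] H) : Prop :=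
  ∀ q, q ∈ projSet A → pLe q p → MvNEquiv A p q → q = p

/-- `A` is a finite von Neumann algebra. -/
def IsFiniteVN (A : VonNeumannAlgebra H) : Prop := IsFiniteProjIn A 1

/-- `A` is a semifinite von Neumann algebra. -/
def IsSemifiniteVN (A : VonNeumannAlgebra H) : Prop :=
  ∀ p ∈ projSet A, p ≠ 0 → ∃ q ∈ projSet A, q ≠ 0 ∧ pLe q p ∧ IsFiniteProjIn A q

/-- An abelian projection of `A`. -/
def IsAbelianProjIn (A : VonNeumannAlgebra H) (e : H →L[ℂ] H) : Prop :=
  e ∈ projSet A ∧ ∀ a ∈ A, ∀ b ∈ A, (e * a * e) * (e * b * e) = (e * b * e) * (e * a * e)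

/-- `A` has a direct summand of type I₂. -/
def HasTypeI2Summand (A : VonNeumannAlgebra H) : Prop :=
  ∃ z e₁ e₂ : H →L[ℂ] H, z ∈ projSet A ∧ z ≠ 0 ∧ (∀ a ∈ A, z * a = a * z) ∧
    IsAbelianProjIn A e₁ ∧ IsAbelianProjIn A e₂ ∧ e₁ * e₂ = 0 ∧ e₁ + e₂ = z ∧
    MvNEquiv A e₁ e₂

/-- `μ` is a (completely additive) measure on a set `P` of projections. -/
def IsMeasureOn (P : Set (H →L[ℂ] H)) (μ : (H →L[ℂ] H) → ℝ≥0∞) : Prop :=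
  ∀ (ι : Type) (e : ι → H →L[ℂ] H) (f : H →L[ℂ] H),
    (∀ i, e i ∈ P) → f ∈ P → (Pairwise fun i j => e i * e j = 0) →
    f = pSupFam e → μ f = ∑' i, μ (e i)

/-- `μ` is a σ-finite measure on the projections of `A`. -/
def IsSigmaFinite (A : VonNeumannAlgebra H) (μ : (H →L[ℂ] H) → ℝ≥0∞) : Prop :=
  ∃ p : ℕ → H →L[ℂ] H, (∀ n, p n ∈ projSet A) ∧ AscendsTo p 1 ∧ ∀ n, μ (p n) < ⊤

/-- `p` is a projection of finite `μ`-measure relative to the family `M`. -/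
def FinMeasProjOn (M : Set (H →L[ℂ] H)) (μ : (H →L[ℂ] H) → ℝ≥0∞)
    (p : H →L[ℂ] H) : Prop :=
  (⨆ q ∈ {q | q ∈ M ∧ pLe q p ∧ μ q < ⊤}, LinearMap.range (q : H →ₗ[ℂ] H)).topologicalClosure
      = LinearMap.range (p : H →ₗ[ℂ] H) ∧
    (⨆ q ∈ {q | q ∈ M ∧ pLe q p ∧ μ q < ⊤}, μ q) < ⊤

/-- A faithful normal finite trace on `A` (the properties of it that we use). -/
structure IsFNFiniteTrace (A : VonNeumannAlgebra H) (τ : (H →L[ℂ] H) → ℝ) : Prop where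
  add : ∀ a b, τ (a + b) = τ a + τ b
  tracial : ∀ a b, τ (a * b) = τ (b * a)
  nonneg : ∀ a, 0 ≤ τ (star a * a)
  faithful : ∀ p, p ∈ projSet A → τ p = 0 → p = 0
  normal : ∀ (r : ℕ → H →L[ℂ] H) (rl : H →L[ℂ] H), (∀ n, r n ∈ projSet A) →
    rl ∈ projSet A → AscendsTo r rl →
    Tendsto (fun n => τ (r n)) atTop (nhds (τ rl))

end Preamble
set_option linter.unusedSectionVars false
section Aux

variable {H : Type} [NormedAddCommGroup H] [InnerProductSpace ℂ H] [CompleteSpace H]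

local notation "⟪" x ", " y "⟫" => @inner ℂ _ _ x y

lemma proj_inner {p : H →L[ℂ] H} (hp : IsSelfAdjoint p) (x y : H) :
    ⟪p x, y⟫ = ⟪x, p y⟫ := by
  conv_lhs => rw [← hp.adjoint_eq]
  exact ContinuousLinearMap.adjoint_inner_left p y x

lemma mem_range_iff {p : H →L[ℂ] H} (hp : IsIdempotentElem p) {x : H} :
    x ∈ LinearMap.range (p : H →ₗ[ℂ] H) ↔ p x = x := by
  constructor
  · rintro ⟨y, rfl⟩
    rw [ContinuousLinearMap.coe_coe, ← ContinuousLinearMap.mul_apply, hp]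
  · intro h; exact ⟨x, h⟩

lemma range_isClosed {p : H →L[ℂ] H} (hp : IsIdempotentElem p) :
    IsClosed ((LinearMap.range (p : H →ₗ[ℂ] H) : Submodule ℂ H) : Set H) := by
  have h : (LinearMap.range (p : H →ₗ[ℂ] H) : Submodule ℂ H) = LinearMap.ker ((1 - p : H →L[ℂ] H) : H →ₗ[ℂ] H) := by
    ext x
    simp only [mem_range_iff hp, LinearMap.mem_ker, ContinuousLinearMap.coe_coe, ContinuousLinearMap.coe_sub',
      Pi.sub_apply, ContinuousLinearMap.one_apply, sub_eq_zero]
    exact eq_comm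
  rw [h]
  exact ContinuousLinearMap.isClosed_ker _

lemma range_closure_eq {p : H →L[ℂ] H} (hp : IsIdempotentElem p) :
    (LinearMap.range (p : H →ₗ[ℂ] H) : Submodule ℂ H).topologicalClosure = LinearMap.range (p : H →ₗ[ℂ] H) :=
  (range_isClosed hp).submodule_topologicalClosure_eq

lemma sProj_eq_of_closure_eq {K : Submodule ℂ H} {f : H →L[ℂ] H} (hf : IsProjOp f)
    (h : K.topologicalClosure = LinearMap.range (f : H →ₗ[ℂ] H)) : sProj K = f := by
  obtain ⟨hfi, hfs⟩ := hf
  haveI : CompleteSpace K.topologicalClosure :=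
    K.isClosed_topologicalClosure.completeSpace_coe
  ext x
  show K.topologicalClosure.starProjection x = f x
  refine Submodule.eq_starProjection_of_mem_of_inner_eq_zero ?_ ?_
  · rw [h]; exact ⟨x, rfl⟩
  · intro w hw
    rw [h, mem_range_iff hfi] at hw
    have hffx : f (f x) = f x := by rw [← ContinuousLinearMap.mul_apply, hfi]
    calc ⟪x - f x, w⟫ = ⟪x - f x, f w⟫ := by rw [hw]
      _ = ⟪f (x - f x), w⟫ := (proj_inner hfs _ _).symm
      _ = 0 := by rw [map_sub, hffx, sub_self, inner_zero_left]

lemma sProj_isProjOp (K : Submodule ℂ H) : IsProjOp (sProj K) := by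
  haveI : CompleteSpace K.topologicalClosure :=
    K.isClosed_topologicalClosure.completeSpace_coe
  constructor
  · show sProj K * sProj K = sProj K
    ext x
    rw [ContinuousLinearMap.mul_apply]
    show K.topologicalClosure.starProjection _ = _
    rw [Submodule.starProjection_eq_self_iff]
    exact ((Submodule.orthogonalProjectionOnto K.topologicalClosure x) : K.topologicalClosure).2
  · exact isSelfAdjoint_starProjection K.topologicalClosure

lemma sProj_range (K : Submodule ℂ H) :
    LinearMap.range ((sProj K) : H →ₗ[ℂ] H) = K.topologicalClosure := by
  haveI : CompleteSpace K.topologicalClosure :=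
    K.isClosed_topologicalClosure.completeSpace_coe
  ext x
  constructor
  · rintro ⟨y, rfl⟩
    exact ((Submodule.orthogonalProjectionOnto K.topologicalClosure y : K.topologicalClosure)).2
  · intro hx
    refine ⟨x, ?_⟩
    show K.topologicalClosure.starProjection x = x
    rw [Submodule.starProjection_eq_self_iff]
    exact hx

end Aux
section Aux2

set_option linter.unusedSectionVars false

variable {H : Type} [NormedAddCommGroup H] [InnerProductSpace ℂ H] [CompleteSpace H]

lemma mul_eq_of_le {p q : H →L[ℂ] H} (hp : IsProjOp p) (hq : IsProjOp q) (h : pLe q p) :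
    p * q = q ∧ q * p = q := by
  have h1 : p * q = q := by
    ext x
    rw [ContinuousLinearMap.mul_apply]
    exact (mem_range_iff hp.1).1 (h ⟨x, rfl⟩)
  refine ⟨h1, ?_⟩
  calc q * p = star q * star p := by rw [hq.2.star_eq, hp.2.star_eq]
    _ = star (p * q) := (star_mul p q).symm
    _ = star q := by rw [h1]
    _ = q := hq.2.star_eq

lemma mul_eq_zero_of_orth {e f : H →L[ℂ] H} (he : IsProjOp e) (hf : IsProjOp f)
    (h : e * f = 0) : f * e = 0 := by
  calc f * e = star f * star e := by rw [hf.2.star_eq, he.2.star_eq]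
    _ = star (e * f) := (star_mul e f).symm
    _ = 0 := by rw [h, star_zero]

lemma sub_proj {p q : H →L[ℂ] H} (hp : IsProjOp p) (hq : IsProjOp q) (h : pLe q p) :
    IsProjOp (p - q) ∧ q * (p - q) = 0 ∧
      LinearMap.range ((p - q : H →L[ℂ] H) : H →ₗ[ℂ] H) ⊔ LinearMap.range (q : H →ₗ[ℂ] H) = LinearMap.range (p : H →ₗ[ℂ] H) := by
  obtain ⟨h1, h2⟩ := mul_eq_of_le hp hq h
  have hidem : IsIdempotentElem (p - q) := by
    show (p - q) * (p - q) = p - q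
    rw [mul_sub, sub_mul, sub_mul, hp.1, h1, h2, hq.1]
    abel
  have hsa : IsSelfAdjoint (p - q) := hp.2.sub hq.2
  have horth : q * (p - q) = 0 := by rw [mul_sub, h2, hq.1, sub_self]
  refine ⟨⟨hidem, hsa⟩, horth, le_antisymm (sup_le ?_ ?_) ?_⟩
  · rintro x ⟨y, rfl⟩
    have : (p - q) y = p ((p - q) y) := by
      rw [← ContinuousLinearMap.mul_apply, mul_sub, hp.1, h1]
    exact ⟨(p - q) y, this.symm⟩
  · exact h
  · rintro x ⟨y, rfl⟩
    have : p y = (p - q) y + q y := by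
      simp [ContinuousLinearMap.sub_apply]
    rw [ContinuousLinearMap.coe_coe, this]
    exact Submodule.add_mem_sup ⟨y, rfl⟩ ⟨y, rfl⟩

lemma add_proj {e f : H →L[ℂ] H} (he : IsProjOp e) (hf : IsProjOp f)
    (h : e * f = 0) :
    IsProjOp (e + f) ∧ LinearMap.range ((e + f : H →L[ℂ] H) : H →ₗ[ℂ] H) = LinearMap.range (e : H →ₗ[ℂ] H) ⊔ LinearMap.range (f : H →ₗ[ℂ] H) := by
  have h' : f * e = 0 := mul_eq_zero_of_orth he hf h
  have hidem : IsIdempotentElem (e + f) := by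
    show (e + f) * (e + f) = e + f
    rw [mul_add, add_mul, add_mul, he.1, hf.1, h, h']
    abel
  refine ⟨⟨hidem, he.2.add hf.2⟩, le_antisymm ?_ (sup_le ?_ ?_)⟩
  · rintro x ⟨y, rfl⟩
    have : (e + f) y = e y + f y := rfl
    rw [ContinuousLinearMap.coe_coe, this]
    exact Submodule.add_mem_sup ⟨y, rfl⟩ ⟨y, rfl⟩
  · rintro x ⟨y, rfl⟩
    refine ⟨e y, ?_⟩
    show e (e y) + f (e y) = e y
    rw [← ContinuousLinearMap.mul_apply e e, he.1, ← ContinuousLinearMap.mul_apply f e, h']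
    simp
  · rintro x ⟨y, rfl⟩
    refine ⟨f y, ?_⟩
    show e (f y) + f (f y) = f y
    rw [← ContinuousLinearMap.mul_apply e f, h, ← ContinuousLinearMap.mul_apply f f, hf.1]
    simp

lemma zero_mem_projSet (A : VonNeumannAlgebra H) : (0 : H →L[ℂ] H) ∈ projSet A :=
  ⟨zero_mem A.toStarSubalgebra, by simp [IsIdempotentElem], by simp [IsSelfAdjoint]⟩

/-- μ 0 = 0, via the empty family. -/
lemma measure_zero (A : VonNeumannAlgebra H) {μ : (H →L[ℂ] H) → ℝ≥0∞}
    (hμ : IsMeasureOn (projSet A) μ) : μ 0 = 0 := by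
  have h0 : IsProjOp (0 : H →L[ℂ] H) := ⟨by simp [IsIdempotentElem], by simp [IsSelfAdjoint]⟩
  have hbotclosed : IsClosed ((⊥ : Submodule ℂ H) : Set H) := by
    rw [Submodule.bot_coe]; exact isClosed_singleton
  have hsup : (0 : H →L[ℂ] H) = pSupFam (fun i : Empty => i.elim) := by
    symm
    apply sProj_eq_of_closure_eq h0
    have h1 : (⨆ i : Empty, LinearMap.range (((i.elim : H →L[ℂ] H)) : H →ₗ[ℂ] H)) = (⊥ : Submodule ℂ H) :=
      iSup_of_empty _
    have h2 : LinearMap.range ((0 : H →L[ℂ] H) : H →ₗ[ℂ] H) = (⊥ : Submodule ℂ H) := by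
      ext x; simp [eq_comm]
    rw [h1, h2]
    exact hbotclosed.submodule_topologicalClosure_eq
  have key := hμ Empty (fun i => i.elim) 0 (fun i => i.elim) (zero_mem_projSet A)
    (by intro i; exact i.elim) hsup
  rw [key, tsum_empty]

end Aux2
section Aux3

set_option linter.unusedSectionVars false

variable {H : Type} [NormedAddCommGroup H] [InnerProductSpace ℂ H] [CompleteSpace H]

lemma add_mem_projSet {A : VonNeumannAlgebra H} {e f : H →L[ℂ] H}
    (he : e ∈ projSet A) (hf : f ∈ projSet A) (h : e * f = 0) : e + f ∈ projSet A :=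
  ⟨add_mem he.1 hf.1, (add_proj he.2 hf.2 h).1⟩

/-- Additivity of μ on an orthogonal pair of projections in A. -/
lemma measure_add {A : VonNeumannAlgebra H} {μ : (H →L[ℂ] H) → ℝ≥0∞}
    (hμ : IsMeasureOn (projSet A) μ) {e f : H →L[ℂ] H}
    (he : e ∈ projSet A) (hf : f ∈ projSet A) (h : e * f = 0) :
    μ (e + f) = μ e + μ f := by
  obtain ⟨haddproj, hrange⟩ := add_proj he.2 hf.2 h
  have hsup : e + f = pSupFam (fun b : Bool => if b then e else f) := by
    symm
    apply sProj_eq_of_closure_eq haddproj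
    have h1 : (⨆ b : Bool, LinearMap.range ((if b then e else f : H →L[ℂ] H) : H →ₗ[ℂ] H))
        = LinearMap.range (e : H →ₗ[ℂ] H) ⊔ LinearMap.range (f : H →ₗ[ℂ] H) := by
      rw [iSup_bool_eq]; simp
    beta_reduce
    rw [h1, ← hrange]
    exact range_closure_eq haddproj.1
  have hpair : Pairwise fun b c : Bool => (if b then e else f) * (if c then e else f) = 0 := by
    intro b c hbc
    have h' := mul_eq_zero_of_orth he.2 hf.2 h
    cases b <;> cases c <;> simp_all
  have key := hμ Bool (fun b => if b then e else f) (e + f)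
    (fun b => by cases b <;> simpa) (add_mem_projSet he hf h) hpair hsup
  rw [key, tsum_bool]
  simp [add_comm]

/-- Finite additivity of μ on finsets of pairwise-orthogonal projections in A. -/
lemma measure_finsum {A : VonNeumannAlgebra H} {μ : (H →L[ℂ] H) → ℝ≥0∞}
    (hμ : IsMeasureOn (projSet A) μ) {ι : Type} (e : ι → H →L[ℂ] H) (s : Finset ι)
    (he : ∀ i ∈ s, e i ∈ projSet A)
    (horth : ∀ i ∈ s, ∀ j ∈ s, i ≠ j → e i * e j = 0) :
    (∑ i ∈ s, e i) ∈ projSet A ∧ μ (∑ i ∈ s, e i) = ∑ i ∈ s, μ (e i) := by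
  classical
  induction s using Finset.induction_on with
  | empty => simpa using ⟨zero_mem_projSet A, measure_zero A hμ⟩
  | @insert a s ha ih =>
    have hes : ∀ i ∈ s, e i ∈ projSet A := fun i hi => he i (Finset.mem_insert_of_mem hi)
    have hos : ∀ i ∈ s, ∀ j ∈ s, i ≠ j → e i * e j = 0 := fun i hi j hj =>
      horth i (Finset.mem_insert_of_mem hi) j (Finset.mem_insert_of_mem hj)
    obtain ⟨hsmem, hsμ⟩ := ih hes hos
    have hsum : ∑ i ∈ insert a s, e i = e a + ∑ i ∈ s, e i := Finset.sum_insert ha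
    have horthA : e a * (∑ i ∈ s, e i) = 0 := by
      rw [Finset.mul_sum]
      refine Finset.sum_eq_zero fun j hj => ?_
      exact horth a (Finset.mem_insert_self a s) j (Finset.mem_insert_of_mem hj)
        (fun hEq => ha (hEq ▸ hj))
    have heA := he a (Finset.mem_insert_self a s)
    constructor
    · rw [hsum]; exact add_mem_projSet heA hsmem horthA
    · rw [hsum, measure_add hμ heA hsmem horthA, hsμ, Finset.sum_insert ha]

end Aux3
section Aux4

set_option linter.unusedSectionVars false

variable {H : Type} [NormedAddCommGroup H] [InnerProductSpace ℂ H] [CompleteSpace H]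

/-- The projection onto the closed span of ranges of a family of projections in `A`
belongs to `A` (double commutant argument). -/
lemma sProj_mem (A : VonNeumannAlgebra H) {ι : Type} (e : ι → H →L[ℂ] H)
    (he : ∀ i, e i ∈ projSet A) :
    sProj (⨆ i, LinearMap.range ((e i) : H →ₗ[ℂ] H)) ∈ A := by
  set K : Submodule ℂ H := ⨆ i, LinearMap.range ((e i) : H →ₗ[ℂ] H) with hK
  set f : H →L[ℂ] H := sProj K with hf
  have hfproj : IsProjOp f := sProj_isProjOp K
  have hfrange : LinearMap.range (f : H →ₗ[ℂ] H) = K.topologicalClosure := sProj_range K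
  -- any element of the commutant maps the closure of K to itself
  have hmaps : ∀ b ∈ Set.centralizer (A : Set (H →L[ℂ] H)),
      ∀ x ∈ K.topologicalClosure, b x ∈ K.topologicalClosure := by
    intro b hb x hx
    have hbK : ∀ y ∈ K, b y ∈ K := by
      intro y hy
      refine Submodule.iSup_induction (motive := fun y => b y ∈ K)
        (fun i => LinearMap.range ((e i) : H →ₗ[ℂ] H)) hy ?_ (by simp) ?_
      · rintro i _ ⟨z, rfl⟩
        have hcomm : e i * b = b * e i := hb (e i) (he i).1
        have : b (e i z) = e i (b z) := by
          rw [← ContinuousLinearMap.mul_apply, ← hcomm, ContinuousLinearMap.mul_apply]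
        rw [ContinuousLinearMap.coe_coe, this]
        exact le_iSup (fun i => LinearMap.range ((e i) : H →ₗ[ℂ] H)) i ⟨b z, rfl⟩
      · intro u v hu hv
        rw [map_add]; exact add_mem hu hv
    have hMT : Set.MapsTo b (K : Set H) (K : Set H) := hbK
    have h2 := hMT.closure b.continuous
    have hx' : x ∈ closure (K : Set H) := by
      rw [← Submodule.topologicalClosure_coe]; exact hx
    have h3 : b x ∈ closure (K : Set H) := h2 hx'
    rw [← Submodule.topologicalClosure_coe] at h3
    exact h3
  -- f commutes with every element of the commutant
  have hcomm : ∀ b ∈ Set.centralizer (A : Set (H →L[ℂ] H)), b * f = f * b := by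
    intro b hb
    have hbstar : star b ∈ Set.centralizer (A : Set (H →L[ℂ] H)) := by
      intro m hm
      have h1 : star m * b = b * star m := hb (star m) (star_mem hm)
      calc m * star b = star (b * star m) := by rw [star_mul, star_star]
        _ = star (star m * b) := by rw [h1]
        _ = star b * m := by rw [star_mul, star_star]
    have hfix : ∀ x ∈ K.topologicalClosure, f x = x := by
      intro x hx
      exact (mem_range_iff hfproj.1).1 (hfrange ▸ hx : x ∈ LinearMap.range (f : H →ₗ[ℂ] H))
    have hfr : ∀ x, f x ∈ K.topologicalClosure := fun x => hfrange ▸ ⟨x, rfl⟩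
    have key : ∀ c, c ∈ Set.centralizer (A : Set (H →L[ℂ] H)) → f * c * f = c * f := by
      intro c hc
      ext x
      simp only [ContinuousLinearMap.mul_apply]
      exact hfix _ (hmaps c hc _ (hfr x))
    have h1 : f * b * f = b * f := key b hb
    have h2 : f * star b * f = star b * f := key (star b) hbstar
    have h3 : f * b * f = f * b := by
      have := congrArg star h2
      simpa [star_mul, star_star, hfproj.2.star_eq, mul_assoc] using this
    rw [← h1, h3]
  show f ∈ (A : Set (H →L[ℂ] H))
  rw [← A.centralizer_centralizer]
  rw [Set.mem_centralizer_iff]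
  intro b hb
  exact hcomm b hb

end Aux4

/-- the restriction of a σ-finite infinite measure on a finite von Neumann
algebra (no type I₂ summand, separable space) to `M_μ` is closed: any hereditary
projection of finite `μ`-measure has `μ p < ∞`. -/
theorem stmt10 {H : Type} [NormedAddCommGroup H] [InnerProductSpace ℂ H] [CompleteSpace H]
    [TopologicalSpace.SeparableSpace H]
    (A : VonNeumannAlgebra H) (hfin : IsFiniteVN A) (hI2 : ¬ HasTypeI2Summand A)
    (μ : (H →L[ℂ] H) → ℝ≥0∞) (hμ : IsMeasureOn (projSet A) μ)
    (hσ : IsSigmaFinite A μ) (hinf : ∃ p ∈ projSet A, μ p = ⊤)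
    (p : H →L[ℂ] H) (hp : p ∈ projSet A)
    (hher : ∀ q ∈ projSet A, pLe q p →
      FinMeasProjOn {r | r ∈ projSet A ∧ μ r < ⊤} μ q) :
    μ p < ⊤ := by
  classical
  obtain ⟨hdense, hbound⟩ := hher p hp (le_refl (LinearMap.range (p : H →ₗ[ℂ] H)))
  -- the collection of orthogonal families of finite-measure subprojections of `p`
  set 𝒞 : Set (Set (H →L[ℂ] H)) :=
    {T : Set (H →L[ℂ] H) |
      (∀ q ∈ T, q ∈ projSet A ∧ pLe q p ∧ μ q < ⊤) ∧ (0 : H →L[ℂ] H) ∉ T ∧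
        T.Pairwise fun a b => a * b = 0} with h𝒞def
  have hzorn : ∀ c ⊆ 𝒞, IsChain (· ⊆ ·) c → ∃ ub ∈ 𝒞, ∀ s ∈ c, s ⊆ ub := by
    intro c hc hchain
    refine ⟨⋃₀ c, ⟨?_, ?_, ?_⟩, fun s hs => Set.subset_sUnion_of_mem hs⟩
    · rintro x ⟨t, htc, hxt⟩; exact (hc htc).1 x hxt
    · rintro ⟨t, htc, h0t⟩; exact (hc htc).2.1 h0t
    · rintro a ⟨t, htc, hat⟩ b ⟨u, huc, hbu⟩ hab
      rcases hchain.total htc huc with h | h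
      · exact (hc huc).2.2 (h hat) hbu hab
      · exact (hc htc).2.2 hat (h hbu) hab
  obtain ⟨T, hT⟩ := zorn_subset 𝒞 hzorn
  obtain ⟨⟨hTSp, hT0, hTorth⟩, hTmax⟩ := hT
  -- the projection onto the closed span of the family
  set K : Submodule ℂ H := ⨆ i : T, LinearMap.range (((i : H →L[ℂ] H)) : H →ₗ[ℂ] H) with hKdef
  set f : H →L[ℂ] H := sProj K with hfdef
  have hfproj : IsProjOp f := sProj_isProjOp K
  have hfrange : LinearMap.range (f : H →ₗ[ℂ] H) = K.topologicalClosure := sProj_range K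
  have hfA : f ∈ A := sProj_mem A (fun i : T => (i : H →L[ℂ] H))
    (fun i => (hTSp i.1 i.2).1)
  have hKle : K ≤ LinearMap.range (p : H →ₗ[ℂ] H) := iSup_le fun i => (hTSp i.1 i.2).2.1
  have hfle : pLe f p := by
    show LinearMap.range (f : H →ₗ[ℂ] H) ≤ LinearMap.range (p : H →ₗ[ℂ] H)
    rw [hfrange]
    exact K.topologicalClosure_minimal hKle (range_isClosed hp.2.1)
  obtain ⟨hrproj, hforth, hrange_sup⟩ := sub_proj hp.2 hfproj hfle
  set r : H →L[ℂ] H := p - f with hrdef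
  have hrA : r ∈ projSet A := ⟨sub_mem hp.1 hfA, hrproj⟩
  have hrle : pLe r p := by
    show LinearMap.range (r : H →ₗ[ℂ] H) ≤ LinearMap.range (p : H →ₗ[ℂ] H)
    rw [← hrange_sup]; exact le_sup_left
  -- the maximal family spans all of `p`
  have hr0 : r = 0 := by
    by_contra hrne
    obtain ⟨hdr, _⟩ := hher r hrA hrle
    have hex : ∃ q, q ∈ projSet A ∧ μ q < ⊤ ∧ pLe q r ∧ q ≠ 0 := by
      by_contra hne
      push_neg at hne
      have hbot : (⨆ q ∈ {q | q ∈ {r' | r' ∈ projSet A ∧ μ r' < ⊤} ∧ pLe q r ∧ μ q < ⊤},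
          LinearMap.range (q : H →ₗ[ℂ] H)) = (⊥ : Submodule ℂ H) := by
        refine le_bot_iff.1 (iSup₂_le fun q hq => ?_)
        have hq0 : q = 0 := hne q hq.1.1 hq.1.2 hq.2.1
        rw [hq0]
        rintro x ⟨y, rfl⟩; simp
      rw [hbot] at hdr
      have hbotclosed : IsClosed ((⊥ : Submodule ℂ H) : Set H) := by
        rw [Submodule.bot_coe]; exact isClosed_singleton
      rw [hbotclosed.submodule_topologicalClosure_eq] at hdr
      apply hrne
      ext x
      have hx : r x ∈ LinearMap.range (r : H →ₗ[ℂ] H) := ⟨x, rfl⟩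
      rw [← hdr] at hx
      simpa using hx
    obtain ⟨q, hqA, hqfin, hqr, hq0⟩ := hex
    have hfq : f * q = 0 := by
      calc f * q = f * (r * q) := by rw [(mul_eq_of_le hrproj hqA.2 hqr).1]
        _ = (f * r) * q := (mul_assoc _ _ _).symm
        _ = 0 := by rw [hforth, zero_mul]
    have horthq : ∀ e ∈ T, e * q = 0 ∧ q * e = 0 := by
      intro e heT
      have heproj : IsProjOp e := (hTSp e heT).1.2
      have helef : pLe e f := by
        show LinearMap.range (e : H →ₗ[ℂ] H) ≤ LinearMap.range (f : H →ₗ[ℂ] H)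
        rw [hfrange]
        exact le_trans
          (le_iSup (fun i : T => LinearMap.range (((i : H →L[ℂ] H)) : H →ₗ[ℂ] H)) ⟨e, heT⟩)
          K.le_topologicalClosure
      have h1 : e * f = e := (mul_eq_of_le hfproj heproj helef).2
      have h2 : e * q = 0 := by rw [← h1, mul_assoc, hfq, mul_zero]
      exact ⟨h2, mul_eq_zero_of_orth heproj hqA.2 h2⟩
    have hqT : q ∉ T := by
      intro hqT
      have hqq := (horthq q hqT).1
      rw [hqA.2.1] at hqq
      exact hq0 hqq
    have hins : insert q T ∈ 𝒞 := by
      refine ⟨?_, ?_, ?_⟩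
      · intro x hx
        rcases Set.mem_insert_iff.1 hx with rfl | hx
        · exact ⟨hqA, le_trans hqr hrle, hqfin⟩
        · exact hTSp x hx
      · intro h0
        rcases Set.mem_insert_iff.1 h0 with h0 | h0
        · exact hq0 h0.symm
        · exact hT0 h0
      · intro a ha b hb hab
        rcases Set.mem_insert_iff.1 ha with rfl | haT <;>
          rcases Set.mem_insert_iff.1 hb with rfl | hbT
        · exact absurd rfl hab
        · exact (horthq b hbT).2
        · exact (horthq a haT).1
        · exact hTorth haT hbT hab
    have hsub := hTmax hins (Set.subset_insert q T)
    exact hqT (hsub (Set.mem_insert q T))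
  have hpf : p = f := by
    have h := sub_eq_zero.1 hr0
    exact h
  -- apply complete additivity with the maximal family
  have hsup : p = pSupFam (fun i : T => (i : H →L[ℂ] H)) := by
    rw [hpf, hfdef, hKdef]; rfl
  have hpair : Pairwise fun i j : T => (i : H →L[ℂ] H) * (j : H →L[ℂ] H) = 0 := by
    intro i j hij
    exact hTorth i.2 j.2 (fun h => hij (Subtype.ext h))
  have key := hμ T (fun i : T => (i : H →L[ℂ] H)) p
    (fun i => (hTSp i.1 i.2).1) hp hpair hsup
  rw [key, ENNReal.tsum_eq_iSup_sum]
  refine lt_of_le_of_lt (iSup_le fun s => ?_) hbound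
  obtain ⟨hmem, hadd⟩ := measure_finsum hμ (fun i : T => (i : H →L[ℂ] H)) s
    (fun i _ => (hTSp i.1 i.2).1)
    (fun i _ j _ hij => hTorth i.2 j.2 (fun h => hij (Subtype.ext h)))
  have hfinsum : (∑ i ∈ s, μ ((i : H →L[ℂ] H))) < ⊤ :=
    ENNReal.sum_lt_top.2 fun i _ => (hTSp i.1 i.2).2.2
  have hsumle : pLe (∑ i ∈ s, ((i : H →L[ℂ] H) : H →L[ℂ] H)) p := by
    rintro x ⟨y, rfl⟩
    have hy : (∑ i ∈ s, ((i : H →L[ℂ] H))) y = ∑ i ∈ s, ((i : H →L[ℂ] H)) y := by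
      simp [ContinuousLinearMap.sum_apply]
    rw [ContinuousLinearMap.coe_coe, hy]
    exact Submodule.sum_mem _ fun i _ => (hTSp i.1 i.2).2.1 ⟨y, rfl⟩
  have hmemSp : (∑ i ∈ s, ((i : H →L[ℂ] H))) ∈
      {q | q ∈ {r' | r' ∈ projSet A ∧ μ r' < ⊤} ∧ pLe q p ∧ μ q < ⊤} :=
    ⟨⟨hmem, by rw [hadd]; exact hfinsum⟩, hsumle, by rw [hadd]; exact hfinsum⟩
  calc ∑ i ∈ s, μ ((i : H →L[ℂ] H)) = μ (∑ i ∈ s, ((i : H →L[ℂ] H))) := hadd.symm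
    _ ≤ _ := le_iSup₂ (f := fun q (_ : q ∈ {q | q ∈ {r' | r' ∈ projSet A ∧ μ r' < ⊤}
        ∧ pLe q p ∧ μ q < ⊤}) => μ q) _ hmemSp
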